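/- Let n ≥ 2, let α₁ ≥ α₂ ≥ … ≥ αₙ and β₁ ≥ β₂ ≥ … ≥ β_{n−1} be real numbers with α_i ≠ β_j for all i, j. Let M be the n×n matrix whose entry (i,j) for 1 ≤ j ≤ n−1 is sign(α_i − β_j) and whose last column entries M_{i,n} all equal 1. Then det M = 2^{n−1} if the interlacing inequalities α₁ ≥ β₁ ≥ α₂ ≥ β₂ ≥ … ≥ β_{n−1} ≥ αₙ hold, and det M = 0 otherwise. -/

import Mathlib

open Matrix Finset

private lemma downclosed_mem_iff {n : ℕ} {S : Finset (Fin n)}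
    (hS : ∀ a b : Fin n, a ≤ b → b ∈ S → a ∈ S) (r : Fin n) :
    r ∈ S ↔ (r : ℕ) < S.card := by
  constructor
  · intro hr
    have h1 : Finset.Iic r ⊆ S := fun x hx => hS x r (Finset.mem_Iic.mp hx) hr
    have h2 := Finset.card_le_card h1
    rw [Fin.card_Iic] at h2
    omega
  · intro hr
    by_contra hmem
    have h1 : S ⊆ Finset.Iio r := by
      intro x hx
      rw [Finset.mem_Iio]
      by_contra hx'
      exact hmem (hS r x (le_of_not_gt hx') hx)
    have h2 := Finset.card_le_card h1
    rw [Fin.card_Iio] at h2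
    omega

private lemma det_step (n : ℕ) :
    (Matrix.of fun i j : Fin (n+1) => if (i:ℕ) ≤ j then (1:ℝ) else -1).det = 2 ^ n := by
  set L : Matrix (Fin (n+1)) (Fin (n+1)) ℝ :=
    Matrix.of (fun i j => if j = 0 then (if i = 0 then (1:ℝ) else -1)
      else (if i = j then 2 else 0)) with hL
  set E : Matrix (Fin (n+1)) (Fin (n+1)) ℝ :=
    Matrix.of (fun i j => if i ≤ j then (1:ℝ) else 0) with hE
  have hfact : (Matrix.of fun i j : Fin (n+1) => if (i:ℕ) ≤ j then (1:ℝ) else -1)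
      = L * E := by
    ext i j
    rw [Matrix.mul_apply]
    have expand : ∀ k, L i k * E k j =
        (if k = 0 then (if i = 0 then (1:ℝ) else -1) * E k j else 0)
        + (if k = i then (if i = 0 then 0 else 2 * E k j) else 0) := by
      intro k
      by_cases h0 : k = 0
      · subst h0
        by_cases hi : i = 0
        · subst hi; simp [hL]
        · simp [hL, hi]
          exact fun h => absurd h.symm hi
      · by_cases hi : k = i
        · subst hi
          simp [hL, h0]
        · simp [hL, h0, hi]
          exact fun h => absurd h.symm hi
    rw [Finset.sum_congr rfl (fun k _ => expand k), Finset.sum_add_distrib,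
      Finset.sum_ite_eq' Finset.univ (0 : Fin (n+1)),
      Finset.sum_ite_eq' Finset.univ i]
    simp only [Finset.mem_univ, if_true, Matrix.of_apply]
    have hE0 : E 0 j = 1 := by simp [hE, Fin.zero_le]
    by_cases hi : i = 0
    · subst hi
      simp [hE0, Nat.zero_le]
    · simp only [hi, if_false, hE0]
      by_cases hij : (i:ℕ) ≤ (j:ℕ)
      · rw [if_pos hij]
        have h2 : E i j = 1 := by
          have : i ≤ j := by rwa [Fin.le_def]
          simp [hE, this]
        rw [h2]; ring
      · rw [if_neg hij]
        have h2 : E i j = 0 := by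
          have : ¬ i ≤ j := by rwa [Fin.le_def]
          simp [hE, this]
        rw [h2]; ring
  have hLtri : L.BlockTriangular OrderDual.toDual := by
    intro i j hij
    have hij' : i < j := hij
    have h1 : (i:ℕ) < (j:ℕ) := hij'
    have hj0 : j ≠ 0 := by
      intro h; subst h; simp at h1
    simp [hL, hj0, ne_of_lt hij']
  have hEtri : E.BlockTriangular id := by
    intro i j hij
    have : ¬ i ≤ j := not_le.mpr hij
    simp [hE, this]
  rw [hfact, Matrix.det_mul, Matrix.det_of_lowerTriangular L hLtri,
    Matrix.det_of_upperTriangular hEtri]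
  have h1 : ∀ i : Fin (n+1), L i i = if i = 0 then 1 else 2 := by
    intro i
    by_cases hi : i = 0 <;> simp [hL, hi]
  have h2 : ∀ i : Fin (n+1), E i i = 1 := by intro i; simp [hE]
  simp only [h1, h2, Finset.prod_const_one, mul_one]
  rw [Fin.prod_univ_succ]
  simp [Fin.succ_ne_zero]

open scoped Classical in
/-- eq. (9) of the paper: the determinant of the `n×n` matrix whose first
`n-1` columns are `sign(α_i - β_j)` and whose last column is all `1`'s equals `2^{n-1}`
times the characteristic function of the Cauchy–Rayleigh interlacing region.
Here `n = M + 2`. -/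
theorem stmt_2 (M : ℕ) (α : Fin (M + 2) → ℝ) (β : Fin (M + 1) → ℝ)
    (hα : Antitone α) (hβ : Antitone β) (hne : ∀ i j, α i ≠ β j) :
    Matrix.det (Matrix.of fun i j : Fin (M + 2) =>
        if h : (j : ℕ) < M + 1 then Real.sign (α i - β ⟨j, h⟩) else 1)
      = if ∀ i : Fin (M + 1), β i ≤ α i.castSucc ∧ α i.succ ≤ β i
          then 2 ^ (M + 1) else 0 := by
  classical
  have hsign : ∀ (i : Fin (M+2)) (j : Fin (M+1)),
      Real.sign (α i - β j) = if β j < α i then 1 else -1 := by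
    intro i j
    rcases lt_or_gt_of_ne (hne i j) with h | h
    · rw [if_neg (not_lt.mpr h.le), Real.sign_of_neg (by linarith)]
    · rw [if_pos h, Real.sign_of_pos (by linarith)]
  set A : Matrix (Fin (M+2)) (Fin (M+2)) ℝ := Matrix.of fun i j : Fin (M + 2) =>
      if h : (j : ℕ) < M + 1 then Real.sign (α i - β ⟨j, h⟩) else 1 with hA
  by_cases hI : ∀ i : Fin (M + 1), β i ≤ α i.castSucc ∧ α i.succ ≤ β i
  · rw [if_pos hI]
    have hrw : A = Matrix.of fun i j : Fin (M+2) => if (i:ℕ) ≤ j then (1:ℝ) else -1 := by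
      ext i j
      simp only [hA, Matrix.of_apply]
      by_cases hj : (j:ℕ) < M+1
      · rw [dif_pos hj, hsign]
        by_cases hij : (i:ℕ) ≤ (j:ℕ)
        · rw [if_pos hij, if_pos]
          have h1 : i ≤ (⟨(j:ℕ), hj⟩ : Fin (M+1)).castSucc := by
            rw [Fin.le_def]; simpa using hij
          have h2 : β ⟨(j:ℕ), hj⟩ ≤ α i := le_trans (hI ⟨(j:ℕ), hj⟩).1 (hα h1)
          exact h2.lt_of_ne (fun e => hne i ⟨(j:ℕ), hj⟩ e.symm)
        · rw [if_neg hij, if_neg]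
          have h1 : (⟨(j:ℕ), hj⟩ : Fin (M+1)).succ ≤ i := by
            rw [Fin.le_def]; simp; omega
          have h2 : α i ≤ β ⟨(j:ℕ), hj⟩ := le_trans (hα h1) (hI ⟨(j:ℕ), hj⟩).2
          exact not_lt.mpr h2
      · rw [dif_neg hj, if_pos (by omega : (i:ℕ) ≤ (j:ℕ))]
    rw [hrw, det_step (M+1)]
  · rw [if_neg hI]
    set T : Fin (M+1) → Finset (Fin (M+2)) :=
      fun j => Finset.univ.filter (fun r => β j < α r) with hT
    have hdown : ∀ (j : Fin (M+1)) (a b : Fin (M+2)), a ≤ b → b ∈ T j → a ∈ T j := by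
      intro j a b hab hb
      simp only [hT, Finset.mem_filter, Finset.mem_univ, true_and] at hb ⊢
      exact lt_of_lt_of_le hb (hα hab)
    have hmono : ∀ j j' : Fin (M+1), j ≤ j' → T j ⊆ T j' := by
      intro j j' hjj r hr
      simp only [hT, Finset.mem_filter, Finset.mem_univ, true_and] at hr ⊢
      exact lt_of_le_of_lt (hβ hjj) hr
    have hAcol : ∀ (i : Fin (M+2)) (j : Fin (M+1)),
        A i j.castSucc = if i ∈ T j then (1:ℝ) else -1 := by
      intro i j
      have hj : ((j.castSucc : Fin (M+2)) : ℕ) < M + 1 := by simp; omega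
      simp only [hA, Matrix.of_apply]
      rw [dif_pos hj]
      have he : (⟨((j.castSucc : Fin (M+2)) : ℕ), hj⟩ : Fin (M+1)) = j := by
        apply Fin.ext; simp
      rw [he, hsign]
      simp [hT]
    have hAlast : ∀ i, A i (Fin.last (M+1)) = 1 := by
      intro i
      simp only [hA, Matrix.of_apply]
      rw [dif_neg (by simp)]
    have hcne : ∀ j : Fin (M+1), j.castSucc ≠ Fin.last (M+1) := by
      intro j h
      have := congrArg (Fin.val) h
      simp at this
      omega
    by_cases hfull : ∃ j : Fin (M+1), T j = Finset.univ
    · obtain ⟨j, hj⟩ := hfull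
      apply Matrix.det_zero_of_column_eq (hcne j)
      intro k
      rw [hAcol, hAlast, hj, if_pos (Finset.mem_univ k)]
    by_cases hzero : ∃ j : Fin (M+1), T j = ∅
    · obtain ⟨j, hj⟩ := hzero
      rw [← Matrix.det_updateCol_add_smul_self A (hcne j) (1:ℝ)]
      apply Matrix.det_eq_zero_of_column_eq_zero j.castSucc
      intro i
      rw [Matrix.updateCol_apply, if_pos rfl, hAcol, hAlast, hj]
      simp
    by_cases hinj : Function.Injective (fun j => (T j).card)
    · -- injective case: derive interlacing, contradiction
      exfalso
      apply hI
      have hsm : StrictMono (fun j => (T j).card) := by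
        have hm : Monotone (fun j => (T j).card) :=
          fun j j' h => Finset.card_le_card (hmono j j' h)
        exact hm.strictMono_of_injective hinj
      have key : ∀ (k : ℕ) (a b : Fin (M+1)), (b:ℕ) = (a:ℕ) + k →
          (T a).card + k ≤ (T b).card := by
        intro k
        induction k with
        | zero =>
          intro a b h
          have : a = b := Fin.ext (by omega)
          subst this; simp
        | succ k ih =>
          intro a b h
          have hbM : (b:ℕ) ≤ M := by omega
          set b' : Fin (M+1) := ⟨(b:ℕ) - 1, by omega⟩ with hb'
          have h1 := ih a b' (by simp [hb']; omega)
          have h2 : (T b').card < (T b).card := hsm (by rw [Fin.lt_def]; show (b:ℕ) - 1 < b; omega)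
          omega
      have hpos : ∀ j : Fin (M+1), 1 ≤ (T j).card := by
        intro j
        rcases Nat.eq_zero_or_pos (T j).card with h | h
        · exact absurd ⟨j, Finset.card_eq_zero.mp h⟩ hzero
        · exact h
      have hub : ∀ j : Fin (M+1), (T j).card ≤ M + 1 := by
        intro j
        have h1 : (T j).card ≤ M + 2 := by
          simpa using Finset.card_le_univ (T j)
        rcases Nat.lt_or_ge (T j).card (M+2) with h | h
        · omega
        · exfalso
          apply hfull
          refine ⟨j, Finset.eq_univ_of_card _ ?_⟩
          simp only [Fintype.card_fin]
          omega
      have hcard : ∀ j : Fin (M+1), (T j).card = (j:ℕ) + 1 := by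
        intro j
        have hlow : (j:ℕ) + 1 ≤ (T j).card := by
          have h1 := key (j:ℕ) ⟨0, by omega⟩ j (by simp)
          have h2 := hpos ⟨0, by omega⟩
          omega
        have hhigh : (T j).card ≤ (j:ℕ) + 1 := by
          have h1 := key (M - (j:ℕ)) j ⟨M, by omega⟩ (by simp; omega)
          have h2 := hub ⟨M, by omega⟩
          omega
        omega
      intro j
      have hmem : ∀ r : Fin (M+2), r ∈ T j ↔ (r:ℕ) < (j:ℕ) + 1 := by
        intro r
        rw [downclosed_mem_iff (hdown j) r, hcard]
      constructor
      · have : j.castSucc ∈ T j := (hmem j.castSucc).mpr (by simp)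
        simp only [hT, Finset.mem_filter, Finset.mem_univ, true_and] at this
        exact this.le
      · have : j.succ ∉ T j := by
          rw [hmem]; simp
        simp only [hT, Finset.mem_filter, Finset.mem_univ, true_and] at this
        exact le_of_not_gt this
    · -- non-injective: two equal columns
      rw [Function.not_injective_iff] at hinj
      obtain ⟨j, j', hcard, hne'⟩ := hinj
      have heq : T j = T j' := by
        rcases le_total j j' with h | h
        · exact Finset.eq_of_subset_of_card_le (hmono j j' h) (le_of_eq hcard.symm)
        · exact (Finset.eq_of_subset_of_card_le (hmono j' j h) (le_of_eq hcard)).symm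
      refine Matrix.det_zero_of_column_eq (i := j.castSucc) (j := j'.castSucc) ?_ ?_
      · intro h
        exact hne' (Fin.castSucc_injective _ h)
      · intro k
        rw [hAcol, hAcol, heq]
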